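/- Let G be a finite simple P₄-free graph on n vertices and let D be a minimum dominating set (γ-set) of G. Then n − γ(G) ≤ C_D(G) ≤ 2n − γ(G), where C_D denotes the domination cover number of D. -/

import Mathlib

open Finset

variable {α β : Type*}

/-- `D` is a dominating set of `G`: every vertex outside `D` has a neighbor in `D`. -/
def IsDomSet (G : SimpleGraph α) (D : Finset α) : Prop :=
  ∀ v ∉ D, ∃ u ∈ D, G.Adj u v

/-- The domination number `γ(G)`: minimum cardinality of a dominating set. -/
noncomputable def domNum (G : SimpleGraph α) : ℕ :=
  sInf {n | ∃ D : Finset α, IsDomSet G D ∧ D.card = n}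

/-- The degree of vertex `v` in `G`. -/
noncomputable def vdeg (G : SimpleGraph α) (v : α) : ℕ :=
  Nat.card (G.neighborSet v)

/-- The (domination) cover number of a set of vertices `A`: the sum of degrees. -/
noncomputable def coverNum (G : SimpleGraph α) (A : Finset α) : ℕ :=
  ∑ v ∈ A, vdeg G v

/-- `D` is a minimum dominating set (γ-set) of `G`. -/
def IsGammaSet (G : SimpleGraph α) (D : Finset α) : Prop :=
  IsDomSet G D ∧ D.card = domNum G

lemma domNum_le {G : SimpleGraph α} {D : Finset α} (hD : IsDomSet G D) :
    domNum G ≤ D.card :=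
  Nat.sInf_le ⟨D, hD, rfl⟩

/-- From an induced P₄ pattern we get a contradiction with P₄-freeness. -/
lemma no_p4 {G : SimpleGraph α} (hP4 : IsEmpty (SimpleGraph.pathGraph 4 ↪g G))
    {w x y z : α} (hwx : G.Adj w x) (hxy : G.Adj x y) (hyz : G.Adj y z)
    (hwy : ¬G.Adj w y) (hwz : ¬G.Adj w z) (hxz : ¬G.Adj x z) : False := by
  have hwx' : w ≠ x := hwx.ne
  have hxy' : x ≠ y := hxy.ne
  have hyz' : y ≠ z := hyz.ne
  have hwy' : w ≠ y := by rintro rfl; exact hwz hyz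
  have hxz' : x ≠ z := by rintro rfl; exact hwz hwx
  have hwz' : w ≠ z := by rintro rfl; exact hwy hyz.symm
  refine hP4.elim ⟨⟨![w,x,y,z], ?_⟩, ?_⟩
  · intro a b h
    fin_cases a <;> fin_cases b <;>
      simp_all [Matrix.cons_val_zero, Matrix.cons_val_one] <;>
      first
        | rfl
        | (exact absurd h (by assumption))
        | (exact absurd h.symm (by assumption))
  · intro a b
    change G.Adj (![w,x,y,z] a) (![w,x,y,z] b) ↔ _
    fin_cases a <;> fin_cases b <;>
      simp [SimpleGraph.pathGraph_adj, hwx, hxy, hyz, hwy, hwz, hxz,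
        hwx.symm, hxy.symm, hyz.symm, G.irrefl, Function.Embedding.coeFn_mk,
        show ((0 : Fin 4) : ℕ) = 0 from rfl, show ((1 : Fin 4) : ℕ) = 1 from rfl,
        show ((2 : Fin 4) : ℕ) = 2 from rfl, show ((3 : Fin 4) : ℕ) = 3 from rfl] <;>
      first
        | (intro h; exact hwy h.symm)
        | (intro h; exact hwz h.symm)
        | (intro h; exact hxz h.symm)
        | skip

/-- Every vertex of a minimum dominating set either is isolated from the rest of `D`
or has an external private neighbor. -/
lemma private_neighbor [Fintype α] {G : SimpleGraph α} {D : Finset α}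
    (hD : IsGammaSet G D) {u : α} (hu : u ∈ D) :
    (∀ w ∈ D, w ≠ u → ¬ G.Adj w u) ∨
    ∃ p, p ∉ D ∧ G.Adj u p ∧ ∀ w ∈ D, w ≠ u → ¬ G.Adj w p := by
  classical
  by_contra h
  push_neg at h
  obtain ⟨⟨w, hwD, hwu, hwadj⟩, h2⟩ := h
  have hdom : IsDomSet G (D.erase u) := by
    intro v hv
    by_cases hvD : v ∈ D
    · have hvu : v = u := by
        by_contra hne
        exact hv (Finset.mem_erase.mpr ⟨hne, hvD⟩)
      subst hvu
      exact ⟨w, Finset.mem_erase.mpr ⟨hwu, hwD⟩, hwadj⟩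
    · obtain ⟨x, hxD, hxv⟩ := hD.1 v hvD
      by_cases hxu : x = u
      · subst hxu
        obtain ⟨w', hw'D, hw'u, hw'adj⟩ := h2 v hvD hxv
        exact ⟨w', Finset.mem_erase.mpr ⟨hw'u, hw'D⟩, hw'adj⟩
      · exact ⟨x, Finset.mem_erase.mpr ⟨hxu, hxD⟩, hxv⟩
  have h1 := domNum_le hdom
  have h2' := Finset.card_erase_of_mem hu
  have h3 : 0 < D.card := Finset.card_pos.mpr ⟨u, hu⟩
  have h4 := hD.2
  omega

/-- In a `P₄`-free graph a vertex of a minimum dominating set `D`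
has at most one neighbor inside `D`. -/
lemma adj_in_D_unique [Fintype α] {G : SimpleGraph α}
    (hP4 : IsEmpty (SimpleGraph.pathGraph 4 ↪g G)) {D : Finset α}
    (hD : IsGammaSet G D) {u w₁ w₂ : α} (hu : u ∈ D) (hw₁ : w₁ ∈ D) (hw₂ : w₂ ∈ D)
    (h1 : G.Adj u w₁) (h2 : G.Adj u w₂) : w₁ = w₂ := by
  by_contra hne
  have hw₁u : w₁ ≠ u := fun h => by subst h; exact G.irrefl h1
  have hw₂u : w₂ ≠ u := fun h => by subst h; exact G.irrefl h2
  have hx1 : ∃ p, p ∉ D ∧ G.Adj w₁ p ∧ ∀ w ∈ D, w ≠ w₁ → ¬ G.Adj w p := by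
    rcases private_neighbor hD hw₁ with h | h
    · exact absurd h1 (h u hu (Ne.symm hw₁u))
    · exact h
  have hx2 : ∃ p, p ∉ D ∧ G.Adj w₂ p ∧ ∀ w ∈ D, w ≠ w₂ → ¬ G.Adj w p := by
    rcases private_neighbor hD hw₂ with h | h
    · exact absurd h2 (h u hu (Ne.symm hw₂u))
    · exact h
  obtain ⟨x₁, hx₁D, hx₁adj, hx₁priv⟩ := hx1
  obtain ⟨x₂, hx₂D, hx₂adj, hx₂priv⟩ := hx2
  have hux₁ : ¬ G.Adj u x₁ := hx₁priv u hu hw₁u.symm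
  have hux₂ : ¬ G.Adj u x₂ := hx₂priv u hu hw₂u.symm
  have hw₂x₁ : ¬ G.Adj w₂ x₁ := hx₁priv w₂ hw₂ (Ne.symm hne)
  have hw₁x₂ : ¬ G.Adj w₁ x₂ := hx₂priv w₁ hw₁ hne
  by_cases hww : G.Adj w₁ w₂
  · by_cases hxx : G.Adj x₁ x₂
    · -- P4 : x₁ - x₂ - w₂ - u
      exact no_p4 hP4 hxx hx₂adj.symm h2.symm
        (fun h => hw₂x₁ h.symm) (fun h => hux₁ h.symm) (fun h => hux₂ h.symm)
    · -- P4 : x₁ - w₁ - w₂ - x₂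
      exact no_p4 hP4 hx₁adj.symm hww hx₂adj
        (fun h => hw₂x₁ h.symm) hxx hw₁x₂
  · -- P4 : x₁ - w₁ - u - w₂
    exact no_p4 hP4 hx₁adj.symm h1.symm h2
      (fun h => hux₁ h.symm) (fun h => hw₂x₁ h.symm) hww

/-- In a `P₄`-free graph a vertex outside a minimum dominating set `D`
has at most two neighbors inside `D`. -/
lemma adj_outside_le_two [Fintype α] {G : SimpleGraph α}
    (hP4 : IsEmpty (SimpleGraph.pathGraph 4 ↪g G)) {D : Finset α}
    (hD : IsGammaSet G D) {v : α} (hv : v ∉ D) :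
    ∀ a ∈ D, ∀ b ∈ D, ∀ c ∈ D, G.Adj v a → G.Adj v b → G.Adj v c →
      a ≠ b → a ≠ c → b ≠ c → False := by
  classical
  have key : ∀ a ∈ D, ∀ b ∈ D, ∀ c ∈ D, G.Adj v a → G.Adj v b → G.Adj v c →
      a ≠ b → a ≠ c → b ≠ c → ¬ G.Adj a c → ¬ G.Adj b c → False := by
    intro a ha b hb c hc hva hvb hvc hab hac hbc hacn hbcn
    set D' : Finset α := insert v ((D.erase a).erase b) with hD'
    have hdom : IsDomSet G D' := by
      intro y hy
      have hyv : y ≠ v := by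
        intro h; subst h; exact hy (Finset.mem_insert_self _ _)
      by_cases hyD : y ∈ D
      · have : y = a ∨ y = b := by
          by_contra h
          push_neg at h
          exact hy (Finset.mem_insert.mpr (Or.inr
            (Finset.mem_erase.mpr ⟨h.2, Finset.mem_erase.mpr ⟨h.1, hyD⟩⟩)))
        rcases this with rfl | rfl
        · exact ⟨v, Finset.mem_insert_self _ _, hva⟩
        · exact ⟨v, Finset.mem_insert_self _ _, hvb⟩
      · obtain ⟨x, hxD, hxy⟩ := hD.1 y hyD
        by_cases hxab : x = a ∨ x = b
        · by_cases hvy : G.Adj v y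
          · exact ⟨v, Finset.mem_insert_self _ _, hvy⟩
          · by_cases hcy : G.Adj c y
            · refine ⟨c, ?_, hcy⟩
              exact Finset.mem_insert.mpr (Or.inr
                (Finset.mem_erase.mpr ⟨hbc.symm, Finset.mem_erase.mpr ⟨hac.symm, hc⟩⟩))
            · exfalso
              rcases hxab with rfl | rfl
              · exact no_p4 hP4 hxy.symm hva.symm hvc
                  (fun h => hvy h.symm) (fun h => hcy h.symm) hacn
              · exact no_p4 hP4 hxy.symm hvb.symm hvc
                  (fun h => hvy h.symm) (fun h => hcy h.symm) hbcn
        · push_neg at hxab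
          refine ⟨x, ?_, hxy⟩
          exact Finset.mem_insert.mpr (Or.inr
            (Finset.mem_erase.mpr ⟨hxab.2, Finset.mem_erase.mpr ⟨hxab.1, hxD⟩⟩))
    have hle := domNum_le hdom
    have hvD' : v ∉ (D.erase a).erase b := fun h =>
      hv (Finset.mem_of_mem_erase (Finset.mem_of_mem_erase h))
    have hb' : b ∈ D.erase a := Finset.mem_erase.mpr ⟨hab.symm, hb⟩
    have hcard : D'.card = ((D.erase a).card - 1) + 1 := by
      rw [hD', Finset.card_insert_of_notMem hvD', Finset.card_erase_of_mem hb']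
    have hcard2 : (D.erase a).card = D.card - 1 := Finset.card_erase_of_mem ha
    have h1 : 0 < (D.erase a).card := Finset.card_pos.mpr ⟨b, hb'⟩
    have h2 : 0 < D.card := Finset.card_pos.mpr ⟨a, ha⟩
    have h3 := hD.2
    omega
  intro a ha b hb c hc hva hvb hvc hab hac hbc
  by_cases h1 : G.Adj a c
  · have hba : ¬ G.Adj a b := fun h =>
      hbc (adj_in_D_unique hP4 hD ha hb hc h h1)
    have hbcn : ¬ G.Adj c b := fun h =>
      hab (adj_in_D_unique hP4 hD hc ha hb h1.symm h)
    exact key a ha c hc b hb hva hvc hvb hac hab hbc.symm hba hbcn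
  · by_cases h2 : G.Adj b c
    · have haa : ¬ G.Adj b a := fun h =>
        hac (adj_in_D_unique hP4 hD hb ha hc h h2)
      exact key b hb c hc a ha hvb hvc hva hbc hab.symm hac.symm haa
        (fun h => h1 h.symm)
    · exact key a ha b hb c hc hva hvb hvc hab hac hbc h1 h2

theorem gammaSet_coverNum_bounds_of_p4Free [Fintype α] (G : SimpleGraph α)
    (hP4 : IsEmpty (SimpleGraph.pathGraph 4 ↪g G))
    (D : Finset α) (hD : IsGammaSet G D) :
    Fintype.card α - domNum G ≤ coverNum G D ∧
      coverNum G D ≤ 2 * Fintype.card α - domNum G := by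
  classical
  have hγ := hD.2
  have hγle : D.card ≤ Fintype.card α := Finset.card_le_univ D
  have hdeg : ∀ v : α, vdeg G v = (Finset.univ.filter (G.Adj v)).card := by
    intro v
    have hset : G.neighborSet v = ↑(Finset.univ.filter (G.Adj v)) := by
      ext u; simp [SimpleGraph.mem_neighborSet]
    rw [vdeg, hset]
    simpa using Nat.card_eq_finsetCard (Finset.univ.filter (G.Adj v))
  constructor
  · -- lower bound
    have hsubset : Finset.univ \ D ⊆ D.biUnion (fun v => Finset.univ.filter (G.Adj v)) := by
      intro y hy
      obtain ⟨u, huD, hadj⟩ := hD.1 y (Finset.mem_sdiff.mp hy).2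
      exact Finset.mem_biUnion.mpr ⟨u, huD, Finset.mem_filter.mpr ⟨Finset.mem_univ _, hadj⟩⟩
    have h1 := Finset.card_le_card hsubset
    have h2 := Finset.card_biUnion_le (s := D) (t := fun v => Finset.univ.filter (G.Adj v))
    have h3 : (Finset.univ \ D).card = Fintype.card α - D.card := by
      rw [Finset.card_sdiff_of_subset (Finset.subset_univ D), Finset.card_univ]
    have h4 : coverNum G D = ∑ v ∈ D, (Finset.univ.filter (G.Adj v)).card :=
      Finset.sum_congr rfl (fun v _ => hdeg v)
    omega
  · -- upper bound
    have hswap : coverNum G D = ∑ u : α, (D.filter (fun v => G.Adj u v)).card := by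
      rw [coverNum]
      simp_rw [hdeg, Finset.card_filter]
      rw [Finset.sum_comm]
      congr 1
      ext u
      congr 1
      ext v
      rw [G.adj_comm]
    have hsplit : ∑ u : α, (D.filter (fun v => G.Adj u v)).card
        = ∑ u ∈ Finset.univ \ D, (D.filter (fun v => G.Adj u v)).card
          + ∑ u ∈ D, (D.filter (fun v => G.Adj u v)).card :=
      (Finset.sum_sdiff (Finset.subset_univ D)).symm
    have hin : ∑ u ∈ D, (D.filter (fun v => G.Adj u v)).card ≤ D.card * 1 := by
      have := Finset.sum_le_card_nsmul D (fun u => (D.filter (fun v => G.Adj u v)).card) 1 ?_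
      · simpa using this
      · intro u hu
        apply Finset.card_le_one.mpr
        intro a ha b hb
        exact adj_in_D_unique hP4 hD hu (Finset.mem_filter.mp ha).1
          (Finset.mem_filter.mp hb).1 (Finset.mem_filter.mp ha).2 (Finset.mem_filter.mp hb).2
    have hout : ∑ u ∈ Finset.univ \ D, (D.filter (fun v => G.Adj u v)).card
        ≤ (Finset.univ \ D).card * 2 := by
      have := Finset.sum_le_card_nsmul (Finset.univ \ D)
        (fun u => (D.filter (fun v => G.Adj u v)).card) 2 ?_
      · simpa using this
      · intro u hu
        by_contra h
        push_neg at h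
        obtain ⟨a, ha, b, hb, c, hc, hab, hac, hbc⟩ := Finset.two_lt_card.mp h
        have huD := (Finset.mem_sdiff.mp hu).2
        exact adj_outside_le_two hP4 hD huD a (Finset.mem_filter.mp ha).1
          b (Finset.mem_filter.mp hb).1 c (Finset.mem_filter.mp hc).1
          (Finset.mem_filter.mp ha).2 (Finset.mem_filter.mp hb).2
          (Finset.mem_filter.mp hc).2 hab hac hbc
    have h3 : (Finset.univ \ D).card = Fintype.card α - D.card := by
      rw [Finset.card_sdiff_of_subset (Finset.subset_univ D), Finset.card_univ]
    omega
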